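/- Let H be a finite multigraph and let H' be obtained from H by a finite sequence of edge-class contractions, where contracting at a pair {u,v} with m_H(u,v) ≥ 1 means merging u and v into a single vertex, deleting all edges joining u and v, and keeping all other edges, with multiplicities of pairs of vertices that become identified being added. Then ind(H') ≤ ind(H). -/

import Mathlib

/-- A finite multigraph: a finite vertex set together with a multiplicity
function counting the parallel edges joining two vertices. -/
structure Multigraph (α : Type*) where
  verts : Finset α
  m : α → α → ℕ

namespace Multigraph

variable {α : Type*} [DecidableEq α]

/-- The invariants of a finite multigraph: the multiplicity function is
symmetric, loopless, and supported on pairs of vertices. -/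
def IsGood (G : Multigraph α) : Prop :=
  (∀ u w, G.m u w = G.m w u) ∧ (∀ u, G.m u u = 0) ∧
    (∀ u w, G.m u w ≠ 0 → u ∈ G.verts ∧ w ∈ G.verts)

/-- Star-contraction `G/v`: merge `v` and all of its neighbours into one new
vertex (kept with the name `v`), delete every edge both of whose endpoints lie
in the merged set, and keep all other edges, with endpoints lying in the merged
set redirected to the new vertex (multiplicities of pairs that become
identified are added). -/
def contractStar (G : Multigraph α) (v : α) : Multigraph α where
  verts := insert v (G.verts.filter fun u => u ≠ v ∧ G.m v u = 0)
  m := fun u w =>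
    if u = w then 0
    else if u = v then
      (if G.m v w ≠ 0 then 0
       else ∑ s ∈ G.verts.filter (fun s => G.m v s ≠ 0), G.m s w)
    else if w = v then
      (if G.m v u ≠ 0 then 0
       else ∑ s ∈ G.verts.filter (fun s => G.m v s ≠ 0), G.m s u)
    else if G.m v u ≠ 0 ∨ G.m v w ≠ 0 then 0
    else G.m u w

/-- The simple edges of `G`: ordered pairs of distinct vertices joined by
exactly one edge. -/
def simpleEdges (G : Multigraph α) : Finset (α × α) :=
  (G.verts ×ˢ G.verts).filter fun p => p.1 ≠ p.2 ∧ G.m p.1 p.2 = 1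

/-- Fuel-based recursion computing the Murasugi–Przytycki index; fuel
`G.verts.card` suffices, since a star-contraction at an endpoint of a simple
edge removes at least one vertex. -/
def indAux : ℕ → Multigraph α → ℕ
  | 0, _ => 0
  | n + 1, G =>
      G.simpleEdges.sup fun p =>
        1 + max (indAux n (G.contractStar p.1)) (indAux n (G.contractStar p.2))

/-- The Murasugi–Przytycki index: `ind G = 0` if `G` has no simple edge, and
otherwise `ind G` is the maximum, over all simple edges `{v₁, v₂}` of `G`, of
`1 + max (ind (G/v₁)) (ind (G/v₂))`. -/
def ind (G : Multigraph α) : ℕ := indAux G.verts.card G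

/-- Contraction of the edge class `{u,v}`: merge `u` and `v` into a single
vertex (kept with the name `u`), delete all edges joining `u` and `v`, and
keep all other edges, with multiplicities of pairs of vertices that become
identified being added. -/
def contractEdge (G : Multigraph α) (u v : α) : Multigraph α where
  verts := G.verts.erase v
  m := fun a b =>
    if a = b then 0
    else if a = v ∨ b = v then 0
    else if a = u then G.m u b + G.m v b
    else if b = u then G.m a u + G.m a v
    else G.m a b

/-- One edge-class contraction step, at a pair `{u,v}` of distinct vertices
with `m u v ≥ 1`. -/
def ContractStep (G G' : Multigraph α) : Prop :=
  ∃ u v, u ∈ G.verts ∧ v ∈ G.verts ∧ u ≠ v ∧ 1 ≤ G.m u v ∧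
    G' = G.contractEdge u v

/-! ### Quotient machinery -/

/-- Quotient of a multigraph by an arbitrary map. -/
def quot (G : Multigraph α) (f : α → α) : Multigraph α where
  verts := G.verts.image f
  m := fun a b =>
    if a = b then 0
    else ∑ x ∈ G.verts.filter (fun x => f x = a),
          ∑ y ∈ G.verts.filter (fun y => f y = b), G.m x y

lemma mem_simpleEdges {G : Multigraph α} {p : α × α} :
    p ∈ G.simpleEdges ↔ p.1 ∈ G.verts ∧ p.2 ∈ G.verts ∧ p.1 ≠ p.2 ∧ G.m p.1 p.2 = 1 := by
  simp [simpleEdges, Finset.mem_filter, Finset.mem_product, and_assoc]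

lemma good_quot {G : Multigraph α} (hG : G.IsGood) (f : α → α) : (G.quot f).IsGood := by
  obtain ⟨hsymm, -, hsupp⟩ := hG
  refine ⟨?_, fun u => by simp [quot], ?_⟩
  · intro u w
    simp only [quot]
    rcases eq_or_ne u w with rfl | h
    · simp
    · rw [if_neg h, if_neg h.symm, Finset.sum_comm]
      exact Finset.sum_congr rfl fun y _ => Finset.sum_congr rfl fun x _ => hsymm x y
  · intro u w h
    simp only [quot] at h
    split_ifs at h with h1
    · exact absurd rfl h
    obtain ⟨x, hx, hx0⟩ := Finset.exists_ne_zero_of_sum_ne_zero h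
    obtain ⟨y, hy, -⟩ := Finset.exists_ne_zero_of_sum_ne_zero hx0
    simp only [Finset.mem_filter] at hx hy
    exact ⟨Finset.mem_image.2 ⟨x, hx.1, hx.2⟩, Finset.mem_image.2 ⟨y, hy.1, hy.2⟩⟩

lemma quot_congr {G : Multigraph α} {f₁ f₂ : α → α} (h : ∀ x ∈ G.verts, f₁ x = f₂ x) :
    G.quot f₁ = G.quot f₂ := by
  have himg : G.verts.image f₁ = G.verts.image f₂ := Finset.image_congr fun x hx => h x hx
  have hfil : ∀ a, G.verts.filter (fun x => f₁ x = a) = G.verts.filter (fun x => f₂ x = a) :=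
    fun a => Finset.filter_congr fun x hx => by rw [h x hx]
  simp only [quot, mk.injEq]
  exact ⟨himg, by funext a b; rw [hfil a, hfil b]⟩

lemma sum_fiber {β : Type*} [DecidableEq β] (s : Finset α) (f : α → α) (g : α → β)
    (a : β) (F : α → ℕ) :
    ∑ x ∈ s.filter (fun x => g (f x) = a), F x
      = ∑ x' ∈ (s.image f).filter (fun x' => g x' = a), ∑ x ∈ s.filter (fun x => f x = x'), F x := by
  rw [← Finset.sum_fiberwise_of_maps_to (g := f)
      (t := (s.image f).filter (fun x' => g x' = a)) ?_ F]
  · refine Finset.sum_congr rfl fun x' hx' => ?_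
    simp only [Finset.mem_filter] at hx'
    rw [Finset.filter_filter]
    refine Finset.sum_congr (Finset.filter_congr fun x hx => ?_) fun _ _ => rfl
    constructor
    · rintro ⟨-, h⟩; exact h
    · rintro h; exact ⟨by rw [h]; exact hx'.2, h⟩
  · intro x hx
    simp only [Finset.mem_filter] at hx ⊢
    exact ⟨Finset.mem_image_of_mem f hx.1, hx.2⟩

lemma quot_quot (G : Multigraph α) (f g : α → α) :
    (G.quot f).quot g = G.quot (fun x => g (f x)) := by
  simp only [quot, mk.injEq]
  refine ⟨Finset.image_image, ?_⟩
  funext a b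
  rcases eq_or_ne a b with rfl | hab
  · simp
  rw [if_neg hab, if_neg hab]
  rw [sum_fiber G.verts f g a, Finset.sum_congr rfl]
  intro x' hx'
  simp only [Finset.mem_filter] at hx'
  have hne : ∀ y' ∈ (G.verts.image f).filter (fun y' => g y' = b), x' ≠ y' := by
    intro y' hy'
    simp only [Finset.mem_filter] at hy'
    rintro rfl
    exact hab (hx'.2 ▸ hy'.2.symm ▸ rfl)
  calc ∑ y' ∈ (G.verts.image f).filter (fun y' => g y' = b),
        (if x' = y' then 0 else ∑ x ∈ G.verts.filter (fun x => f x = x'),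
          ∑ y ∈ G.verts.filter (fun y => f y = y'), G.m x y)
      = ∑ y' ∈ (G.verts.image f).filter (fun y' => g y' = b),
          ∑ x ∈ G.verts.filter (fun x => f x = x'),
          ∑ y ∈ G.verts.filter (fun y => f y = y'), G.m x y := by
        refine Finset.sum_congr rfl fun y' hy' => ?_
        rw [if_neg (hne y' hy')]
    _ = ∑ x ∈ G.verts.filter (fun x => f x = x'),
          ∑ y' ∈ (G.verts.image f).filter (fun y' => g y' = b),
          ∑ y ∈ G.verts.filter (fun y => f y = y'), G.m x y := Finset.sum_comm
    _ = ∑ x ∈ G.verts.filter (fun x => f x = x'),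
          ∑ y ∈ G.verts.filter (fun y => g (f y) = b), G.m x y := by
        refine Finset.sum_congr rfl fun x _ => ?_
        rw [sum_fiber G.verts f g b (fun y => G.m x y)]

/-- The merging map of a star contraction. -/
def starMap (G : Multigraph α) (v : α) : α → α :=
  fun x => if x = v ∨ G.m v x ≠ 0 then v else x

lemma starMap_fiber_v {G : Multigraph α} {v : α} (hv : v ∈ G.verts) :
    G.verts.filter (fun x => G.starMap v x = v)
      = insert v (G.verts.filter (fun s => G.m v s ≠ 0)) := by
  ext x
  simp only [Finset.mem_filter, Finset.mem_insert]
  simp only [starMap]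
  constructor
  · rintro ⟨hx, h⟩
    by_cases hc : x = v ∨ G.m v x ≠ 0
    · rcases hc with h1 | h2
      · exact Or.inl h1
      · exact Or.inr ⟨hx, h2⟩
    · rw [if_neg hc] at h; exact absurd (Or.inl h) hc
  · rintro (rfl | ⟨hx, h⟩)
    · exact ⟨hv, by simp⟩
    · exact ⟨hx, by rw [if_pos (Or.inr h)]⟩

lemma starMap_sum_fiber_ne {G : Multigraph α} {v a : α} (ha : a ≠ v) (F : α → ℕ) :
    ∑ x ∈ G.verts.filter (fun x => G.starMap v x = a), F x
      = if a ∈ G.verts ∧ G.m v a = 0 then F a else 0 := by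
  have hfil : G.verts.filter (fun x => G.starMap v x = a)
      = if a ∈ G.verts ∧ G.m v a = 0 then {a} else ∅ := by
    ext x
    by_cases hc : a ∈ G.verts ∧ G.m v a = 0
    · rw [if_pos hc]
      simp only [Finset.mem_filter, Finset.mem_singleton]
      simp only [starMap]
      constructor
      · rintro ⟨hx, h⟩
        by_cases hc' : x = v ∨ G.m v x ≠ 0
        · rw [if_pos hc'] at h; exact absurd h.symm ha
        · rwa [if_neg hc'] at h
      · rintro rfl
        exact ⟨hc.1, by rw [if_neg (by push_neg; exact ⟨ha, hc.2⟩)]⟩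
    · rw [if_neg hc]
      simp only [Finset.mem_filter, Finset.notMem_empty, iff_false, not_and]
      simp only [starMap]
      intro hx h
      by_cases hc' : x = v ∨ G.m v x ≠ 0
      · rw [if_pos hc'] at h; exact ha h.symm
      · rw [if_neg hc'] at h
        subst h
        push_neg at hc'
        exact hc ⟨hx, hc'.2⟩
  rw [hfil]
  split_ifs <;> simp

lemma contractStar_eq_quot {G : Multigraph α} (hG : G.IsGood) {v : α} (hv : v ∈ G.verts) :
    G.contractStar v = G.quot (G.starMap v) := by
  obtain ⟨hsymm, hloop, hsupp⟩ := hG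
  have hvnotN : v ∉ G.verts.filter (fun s => G.m v s ≠ 0) := by
    simp [Finset.mem_filter, hloop]
  have hsum_v : ∀ F : α → ℕ,
      ∑ x ∈ G.verts.filter (fun x => G.starMap v x = v), F x
        = F v + ∑ s ∈ G.verts.filter (fun s => G.m v s ≠ 0), F s := by
    intro F
    rw [starMap_fiber_v hv, Finset.sum_insert hvnotN]
  simp only [contractStar, quot, mk.injEq]
  constructor
  · ext z
    simp only [Finset.mem_insert, Finset.mem_filter, Finset.mem_image, starMap]
    constructor
    · rintro (rfl | ⟨hz, hz1, hz2⟩)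
      · refine ⟨_, hv, ?_⟩
        split <;> tauto
      · exact ⟨z, hz, by rw [if_neg (by push_neg; exact ⟨hz1, hz2⟩)]⟩
    · rintro ⟨t, ht, h⟩
      by_cases hc : t = v ∨ G.m v t ≠ 0
      · rw [if_pos hc] at h; exact Or.inl h.symm
      · rw [if_neg hc] at h
        push_neg at hc
        subst h
        exact Or.inr ⟨ht, hc.1, hc.2⟩
  · funext u w
    rcases eq_or_ne u w with rfl | huw
    · simp
    rw [if_neg huw, if_neg huw]
    rcases eq_or_ne u v with rfl | huv
    · -- u = v
      have hwv : w ≠ u := huw.symm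
      rw [if_pos rfl, hsum_v]
      by_cases hmw : G.m u w ≠ 0
      · rw [if_pos hmw]
        have : ∀ x, (∑ y ∈ G.verts.filter (fun y => G.starMap u y = w), G.m x y) = 0 := by
          intro x
          rw [starMap_sum_fiber_ne hwv]
          rw [if_neg (by rintro ⟨-, h0⟩; exact hmw h0)]
        simp [this]
      · push_neg at hmw
        rw [if_neg (by simp [hmw])]
        simp only [starMap_sum_fiber_ne hwv, if_pos, hmw, and_true]
        by_cases hwin : w ∈ G.verts
        · simp only [if_pos hwin, hmw, zero_add]
        · simp only [if_neg hwin]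
          rw [Finset.sum_eq_zero, Finset.sum_const_zero, add_zero]
          intro s hs
          by_contra h0
          exact hwin (hsupp s w h0).2
    · rw [if_neg huv]
      rcases eq_or_ne w v with rfl | hwv
      · -- w = v
        rw [if_pos rfl, starMap_sum_fiber_ne huv]
        by_cases hmu : G.m w u ≠ 0
        · rw [if_pos hmu, if_neg (by rintro ⟨-, h0⟩; exact hmu h0)]
        · push_neg at hmu
          rw [if_neg (by simp [hmu])]
          by_cases huin : u ∈ G.verts
          · rw [if_pos ⟨huin, hmu⟩, hsum_v (fun y => G.m u y),
              show G.m u w = 0 from (hsymm u w).trans hmu, zero_add]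
            exact Finset.sum_congr rfl fun s _ => hsymm s u
          · rw [if_neg (by rintro ⟨h, -⟩; exact huin h)]
            refine Finset.sum_eq_zero fun s hs => ?_
            by_contra h0
            exact huin (hsupp s u h0).2
      · -- generic
        rw [if_neg hwv]
        simp only [starMap_sum_fiber_ne huv, starMap_sum_fiber_ne hwv]
        split_ifs with h1 h2 h3 h4 h5 <;> try rfl
        · exact absurd h1 (by push_neg; exact ⟨h2.2, h3.2⟩)
        · -- ¬cond1, u-fiber ok, w-fiber fails : m u w = 0
          push_neg at h1
          by_contra h0
          exact h5 ⟨(hsupp u w h0).2, h1.2⟩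
        · -- ¬cond1, u-fiber fails : m u w = 0
          push_neg at h1
          by_contra h0
          exact h4 ⟨(hsupp u w h0).1, h1.1⟩

lemma contractEdge_eq_quot {G : Multigraph α} (hG : G.IsGood) {u v : α}
    (hu : u ∈ G.verts) (hv : v ∈ G.verts) (huv : u ≠ v) :
    G.contractEdge u v = G.quot (fun x => if x = v then u else x) := by
  obtain ⟨hsymm, hloop, hsupp⟩ := hG
  have fib_u : G.verts.filter (fun x => (if x = v then u else x) = u) = {u, v} := by
    ext x
    simp only [Finset.mem_filter, Finset.mem_insert, Finset.mem_singleton]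
    constructor
    · rintro ⟨hx, h⟩
      by_cases hxv : x = v
      · exact Or.inr hxv
      · rw [if_neg hxv] at h; exact Or.inl h
    · rintro (rfl | rfl)
      · exact ⟨hu, by rw [if_neg huv]⟩
      · exact ⟨hv, by rw [if_pos rfl]⟩
  have fib_v : G.verts.filter (fun x => (if x = v then u else x) = v) = ∅ := by
    ext x
    simp only [Finset.mem_filter, Finset.notMem_empty, iff_false, not_and]
    intro hx h
    by_cases hxv : x = v
    · rw [if_pos hxv] at h; exact huv h
    · rw [if_neg hxv] at h; exact hxv h
  have fib_ne : ∀ a, a ≠ u → a ≠ v → G.verts.filter (fun x => (if x = v then u else x) = a) =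
      if a ∈ G.verts then {a} else ∅ := by
    intro a hau hav
    ext x
    by_cases ha : a ∈ G.verts
    · rw [if_pos ha]
      simp only [Finset.mem_filter, Finset.mem_singleton]
      constructor
      · rintro ⟨hx, h⟩
        by_cases hxv : x = v
        · rw [if_pos hxv] at h; exact absurd h.symm hau
        · rwa [if_neg hxv] at h
      · rintro rfl; exact ⟨ha, by rw [if_neg hav]⟩
    · rw [if_neg ha]
      simp only [Finset.mem_filter, Finset.notMem_empty, iff_false, not_and]
      intro hx h
      by_cases hxv : x = v
      · rw [if_pos hxv] at h; exact absurd h.symm hau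
      · rw [if_neg hxv] at h; subst h; exact absurd hx ha
  have sum_ne : ∀ a, a ≠ u → a ≠ v → ∀ F : α → ℕ,
      ∑ x ∈ G.verts.filter (fun x => (if x = v then u else x) = a), F x
        = if a ∈ G.verts then F a else 0 := by
    intro a hau hav F
    rw [fib_ne a hau hav]
    split_ifs <;> simp
  simp only [contractEdge, quot, mk.injEq]
  constructor
  · ext z
    simp only [Finset.mem_erase, Finset.mem_image]
    constructor
    · rintro ⟨hzv, hz⟩
      exact ⟨z, hz, if_neg hzv⟩
    · rintro ⟨t, ht, h⟩
      by_cases htv : t = v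
      · rw [if_pos htv] at h; subst h; exact ⟨huv, hu⟩
      · rw [if_neg htv] at h; subst h; exact ⟨htv, ht⟩
  · funext a b
    rcases eq_or_ne a b with rfl | hab
    · simp
    rw [if_neg hab, if_neg hab]
    by_cases hav : a = v
    · subst hav
      rw [if_pos (Or.inl rfl), fib_v, Finset.sum_empty]
    by_cases hbv : b = v
    · subst hbv
      rw [if_pos (Or.inr rfl), fib_v]
      simp
    rw [if_neg (by push_neg; exact ⟨hav, hbv⟩)]
    by_cases hau : a = u
    · subst hau
      rw [if_pos rfl, fib_u, Finset.sum_pair huv, sum_ne b hab.symm hbv,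
        sum_ne b hab.symm hbv]
      by_cases hb : b ∈ G.verts
      · rw [if_pos hb, if_pos hb]
      · rw [if_neg hb, if_neg hb]
        rcases Nat.eq_zero_or_pos (G.m a b) with h0 | h0
        · rw [h0]
          rcases Nat.eq_zero_or_pos (G.m v b) with h1 | h1
          · rw [h1]
          · exact absurd (hsupp v b (Nat.pos_iff_ne_zero.mp h1)) (by tauto)
        · exact absurd (hsupp a b (Nat.pos_iff_ne_zero.mp h0)) (by tauto)
    rw [if_neg hau]
    by_cases hbu : b = u
    · subst hbu
      rw [if_pos rfl, sum_ne a hau hav]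
      by_cases ha : a ∈ G.verts
      · rw [if_pos ha, fib_u, Finset.sum_pair huv]
      · rw [if_neg ha]
        have h1 : G.m a b = 0 := by
          by_contra h0; exact ha (hsupp a b h0).1
        have h2 : G.m a v = 0 := by
          by_contra h0; exact ha (hsupp a v h0).1
        rw [h1, h2]
    rw [if_neg hbu, sum_ne a hau hav]
    by_cases ha : a ∈ G.verts
    · rw [if_pos ha, sum_ne b hbu hbv]
      by_cases hb : b ∈ G.verts
      · rw [if_pos hb]
      · rw [if_neg hb]
        by_contra h0; exact hb (hsupp a b (by simpa using h0)).2
    · rw [if_neg ha]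
      by_contra h0; exact ha (hsupp a b (by simpa using h0)).1

lemma good_contractStar {G : Multigraph α} (hG : G.IsGood) {v : α} (hv : v ∈ G.verts) :
    (G.contractStar v).IsGood := by
  rw [contractStar_eq_quot hG hv]; exact good_quot hG _

lemma card_contractStar_lt {G : Multigraph α} {a b : α}
    (ha : a ∈ G.verts) (hb : b ∈ G.verts) (hab : a ≠ b) (hm : G.m a b ≠ 0) :
    (G.contractStar a).verts.card < G.verts.card := by
  apply Finset.card_lt_card
  rw [Finset.ssubset_def]
  constructor
  · simp only [contractStar]
    exact Finset.insert_subset ha (Finset.filter_subset _ _)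
  · intro hsub
    have := hsub hb
    simp only [contractStar, Finset.mem_insert, Finset.mem_filter] at this
    rcases this with h | ⟨-, -, h⟩
    · exact hab h.symm
    · exact hm h

/-- Sequences of legal star-contractions at simple-edge endpoints. -/
def Seq : ℕ → Multigraph α → Prop
  | 0, _ => True
  | k + 1, G => ∃ p ∈ G.simpleEdges, Seq k (G.contractStar p.1)

lemma indAux_of_no_simpleEdges {G : Multigraph α} (h : G.simpleEdges = ∅) :
    ∀ n, indAux n G = 0
  | 0 => rfl
  | n + 1 => by simp [indAux, h]

lemma indAux_succ_eq {G : Multigraph α} (hG : G.IsGood) (m : ℕ)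
    (hrec : ∀ H : Multigraph α, H.IsGood → H.verts.card ≤ m → indAux m H = ind H)
    (hm : G.verts.card ≤ m + 1) :
    indAux (m + 1) G
      = G.simpleEdges.sup fun p =>
          1 + max (ind (G.contractStar p.1)) (ind (G.contractStar p.2)) := by
  show G.simpleEdges.sup _ = _
  apply Finset.sup_congr rfl
  intro p hp
  obtain ⟨h1, h2, h3, h4⟩ := mem_simpleEdges.1 hp
  have h4' : G.m p.2 p.1 = 1 := by rw [hG.1]; exact h4
  have c1 : (G.contractStar p.1).verts.card ≤ m :=
    Nat.lt_succ_iff.mp (lt_of_lt_of_le (card_contractStar_lt h1 h2 h3 (by simp [h4])) hm)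
  have c2 : (G.contractStar p.2).verts.card ≤ m :=
    Nat.lt_succ_iff.mp (lt_of_lt_of_le
      (card_contractStar_lt h2 h1 h3.symm (by simp [h4'])) hm)
  rw [hrec _ (good_contractStar hG h1) c1, hrec _ (good_contractStar hG h2) c2]

lemma indAux_eq_ind : ∀ (n : ℕ) (G : Multigraph α), G.IsGood → G.verts.card ≤ n →
    indAux n G = ind G := by
  intro n
  induction n using Nat.strong_induction_on with
  | _ n ih =>
    intro G hG hcard
    match n with
    | 0 =>
      have h0 : G.verts.card = 0 := Nat.le_zero.mp hcard
      rw [ind, h0]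
    | m + 1 =>
      rcases Nat.lt_or_ge G.verts.card (m + 1) with hlt | hge
      · -- card ≤ m
        have hc : G.verts.card ≤ m := Nat.lt_succ_iff.mp hlt
        have hrec : ∀ H : Multigraph α, H.IsGood → H.verts.card ≤ m → indAux m H = ind H :=
          fun H hH h => ih m (Nat.lt_succ_self m) H hH h
        rw [indAux_succ_eq hG m hrec hcard, ind]
        match hc' : G.verts.card with
        | 0 =>
          have hse : G.simpleEdges = ∅ := by
            rw [Finset.eq_empty_iff_forall_notMem]
            intro p hp
            have := (mem_simpleEdges.1 hp).1
            simp [Finset.card_eq_zero.mp hc'] at this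
          simp [hse, indAux]
        | c + 1 =>
          have hcm : c < m + 1 := by omega
          have hrec' : ∀ H : Multigraph α, H.IsGood → H.verts.card ≤ c → indAux c H = ind H :=
            fun H hH h => ih c hcm H hH h
          rw [indAux_succ_eq hG c hrec' (le_of_eq hc')]
      · have : G.verts.card = m + 1 := le_antisymm hcard hge
        rw [ind, this]

lemma swap_mem_simpleEdges {G : Multigraph α} (hG : G.IsGood) {p : α × α}
    (hp : p ∈ G.simpleEdges) : (p.2, p.1) ∈ G.simpleEdges := by
  obtain ⟨h1, h2, h3, h4⟩ := mem_simpleEdges.1 hp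
  exact mem_simpleEdges.2 ⟨h2, h1, h3.symm, by rw [← hG.1]; exact h4⟩

lemma seq_le_ind : ∀ (n : ℕ) (G : Multigraph α), G.IsGood → G.verts.card = n →
    ∀ k, Seq k G → k ≤ ind G := by
  intro n
  induction n using Nat.strong_induction_on with
  | _ n ih =>
    intro G hG hcard k hk
    match k with
    | 0 => exact Nat.zero_le _
    | k + 1 =>
      obtain ⟨p, hp, hs⟩ := hk
      obtain ⟨h1, h2, h3, h4⟩ := mem_simpleEdges.1 hp
      have hlt : (G.contractStar p.1).verts.card < n := by
        rw [← hcard]; exact card_contractStar_lt h1 h2 h3 (by simp [h4])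
      have hgood1 := good_contractStar hG h1
      have hk' : k ≤ ind (G.contractStar p.1) :=
        ih _ hlt _ hgood1 rfl k hs
      match hn : n with
      | 0 => omega
      | m + 1 =>
        have hm1 : (G.contractStar p.1).verts.card ≤ m := by omega
        rw [ind, hcard]
        show k + 1 ≤ G.simpleEdges.sup fun q =>
          1 + max (indAux m (G.contractStar q.1)) (indAux m (G.contractStar q.2))
        refine le_trans ?_ (Finset.le_sup hp)
        have : indAux m (G.contractStar p.1) = ind (G.contractStar p.1) :=
          indAux_eq_ind m _ hgood1 hm1
        omega

lemma seq_ind : ∀ (n : ℕ) (G : Multigraph α), G.IsGood → G.verts.card = n →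
    Seq (ind G) G := by
  intro n
  induction n using Nat.strong_induction_on with
  | _ n ih =>
    intro G hG hcard
    rcases Finset.eq_empty_or_nonempty G.simpleEdges with hse | hse
    · rw [ind, indAux_of_no_simpleEdges hse]
      trivial
    · obtain ⟨p₀, hp₀⟩ := hse
      have hv : p₀.1 ∈ G.verts := (mem_simpleEdges.1 hp₀).1
      match hn : n with
      | 0 =>
        rw [Finset.card_eq_zero] at hcard
        simp [hcard] at hv
      | m + 1 =>
        subst hn
        obtain ⟨p, hp, hsup⟩ := Finset.exists_mem_eq_sup G.simpleEdges ⟨p₀, hp₀⟩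
          (fun p => 1 + max (indAux m (G.contractStar p.1)) (indAux m (G.contractStar p.2)))
        obtain ⟨h1, h2, h3, h4⟩ := mem_simpleEdges.1 hp
        have hind : ind G = 1 + max (indAux m (G.contractStar p.1))
            (indAux m (G.contractStar p.2)) := by
          rw [ind, hcard]; exact hsup
        have hc1 : (G.contractStar p.1).verts.card < m + 1 := by
          rw [← hcard]; exact card_contractStar_lt h1 h2 h3 (by simp [h4])
        have hc2 : (G.contractStar p.2).verts.card < m + 1 := by
          rw [← hcard]
          exact card_contractStar_lt h2 h1 h3.symm (by rw [hG.1 p.2 p.1]; simp [h4])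
        have hg1 := good_contractStar hG h1
        have hg2 := good_contractStar hG h2
        rcases le_total (indAux m (G.contractStar p.2)) (indAux m (G.contractStar p.1)) with
          hmax | hmax
        · rw [hind, max_eq_left hmax, add_comm]
          refine ⟨p, hp, ?_⟩
          rw [indAux_eq_ind m _ hg1 (by omega)]
          exact ih _ hc1 _ hg1 rfl
        · rw [hind, max_eq_right hmax, add_comm]
          refine ⟨(p.2, p.1), swap_mem_simpleEdges hG hp, ?_⟩
          rw [indAux_eq_ind m _ hg2 (by omega)]
          exact ih _ hc2 _ hg2 rfl

lemma quot_m_ne_zero {G : Multigraph α} {f : α → α} {x t : α}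
    (hx : x ∈ G.verts) (ht : t ∈ G.verts) (hne : f x ≠ f t) (hm : G.m x t ≠ 0) :
    (G.quot f).m (f x) (f t) ≠ 0 := by
  have h1 : (G.quot f).m (f x) (f t)
      = ∑ x' ∈ G.verts.filter (fun z => f z = f x),
          ∑ y' ∈ G.verts.filter (fun z => f z = f t), G.m x' y' := by
    simp only [quot, if_neg hne]
  rw [h1]
  have hx' : x ∈ G.verts.filter (fun z => f z = f x) := Finset.mem_filter.2 ⟨hx, rfl⟩
  have ht' : t ∈ G.verts.filter (fun z => f z = f t) := Finset.mem_filter.2 ⟨ht, rfl⟩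
  have hle : G.m x t ≤ ∑ y' ∈ G.verts.filter (fun z => f z = f t), G.m x y' :=
    Finset.single_le_sum (fun _ _ => Nat.zero_le _) ht'
  have hle2 : ∑ y' ∈ G.verts.filter (fun z => f z = f t), G.m x y'
      ≤ ∑ x' ∈ G.verts.filter (fun z => f z = f x),
          ∑ y' ∈ G.verts.filter (fun z => f z = f t), G.m x' y' :=
    Finset.single_le_sum (f := fun x' => ∑ y' ∈ G.verts.filter (fun z => f z = f t), G.m x' y')
      (fun _ _ => Nat.zero_le _) hx'
  omega

lemma seq_quot : ∀ (k : ℕ) (G : Multigraph α) (f : α → α), G.IsGood →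
    Seq k (G.quot f) → Seq k G := by
  intro k
  induction k with
  | zero => intro G f _ _; trivial
  | succ k ih =>
    rintro G f hG ⟨⟨a, c⟩, hmem, hseq⟩
    obtain ⟨ha, hc, hac, hm1⟩ := mem_simpleEdges.1 hmem
    -- extract a simple edge (x, y) of G below (a, c)
    have hm1' : ∑ x ∈ G.verts.filter (fun z => f z = a),
        ∑ y ∈ G.verts.filter (fun z => f z = c), G.m x y = 1 := by
      simpa only [quot, if_neg hac] using hm1
    obtain ⟨x, hx, hx0⟩ := Finset.exists_ne_zero_of_sum_ne_zero
      (by rw [hm1']; exact one_ne_zero)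
    obtain ⟨y, hy, hy0⟩ := Finset.exists_ne_zero_of_sum_ne_zero hx0
    obtain ⟨hxv, hxa⟩ := Finset.mem_filter.1 hx
    obtain ⟨hyv, hyc⟩ := Finset.mem_filter.1 hy
    have hxy : x ≠ y := fun h => hac (hxa ▸ hyc ▸ h ▸ rfl)
    have hmxy : G.m x y = 1 := by
      have le1 : G.m x y ≤ 1 := by
        calc G.m x y ≤ ∑ y' ∈ G.verts.filter (fun z => f z = c), G.m x y' :=
              Finset.single_le_sum (fun _ _ => Nat.zero_le _) hy
          _ ≤ ∑ x' ∈ G.verts.filter (fun z => f z = a),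
                ∑ y' ∈ G.verts.filter (fun z => f z = c), G.m x' y' :=
              Finset.single_le_sum
                (f := fun x' => ∑ y' ∈ G.verts.filter (fun z => f z = c), G.m x' y')
                (fun _ _ => Nat.zero_le _) hx
          _ = 1 := hm1'
      omega
    have hedge : (x, y) ∈ G.simpleEdges := mem_simpleEdges.2 ⟨hxv, hyv, hxy, hmxy⟩
    -- rewrite the contracted graph as a quotient of G.contractStar x
    have e1 : (G.quot f).contractStar a
        = G.quot (fun t => (G.quot f).starMap a (f t)) := by
      rw [contractStar_eq_quot (good_quot hG f) ha, quot_quot]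
    have e2 : G.quot (fun t => (G.quot f).starMap a (f t))
        = (G.contractStar x).quot (fun t => (G.quot f).starMap a (f t)) := by
      rw [contractStar_eq_quot hG hxv, quot_quot]
      apply quot_congr
      intro t ht
      show (G.quot f).starMap a (f t) = (G.quot f).starMap a (f (G.starMap x t))
      have hstar : G.starMap x t = if t = x ∨ G.m x t ≠ 0 then x else t := rfl
      by_cases hcond : t = x ∨ G.m x t ≠ 0
      · rw [hstar, if_pos hcond]
        rcases hcond with rfl | hmt
        · rfl
        · -- both sides collapse to `a`
          have hfx : (G.quot f).starMap a (f x) = a := by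
            simp [starMap, hxa]
          rw [hfx]
          by_cases hta : f t = a
          · simp [starMap, hta]
          · have htv : t ∈ G.verts := (hG.2.2 x t hmt).2
            have hq : (G.quot f).m a (f t) ≠ 0 := by
              rw [← hxa]
              exact quot_m_ne_zero hxv htv (by rw [hxa]; exact fun h => hta h.symm) hmt
            simp only [starMap]
            rw [if_pos (Or.inr hq)]
      · rw [hstar, if_neg hcond]
    rw [e1, e2] at hseq
    exact ⟨(x, y), hedge, ih (G.contractStar x) _ (good_contractStar hG hxv) hseq⟩

lemma good_contractStep {G G' : Multigraph α} (hG : G.IsGood) (h : ContractStep G G') :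
    G'.IsGood := by
  obtain ⟨u, v, hu, hv, huv, -, rfl⟩ := h
  rw [contractEdge_eq_quot hG hu hv huv]
  exact good_quot hG _

lemma ind_contractStep {G G' : Multigraph α} (hG : G.IsGood) (h : ContractStep G G') :
    G'.ind ≤ G.ind := by
  obtain ⟨u, v, hu, hv, huv, -, rfl⟩ := h
  rw [contractEdge_eq_quot hG hu hv huv]
  set Q := G.quot (fun x => if x = v then u else x) with hQ
  have hQg : Q.IsGood := good_quot hG _
  have h1 : Seq Q.ind Q := seq_ind _ Q hQg rfl
  have h2 : Seq Q.ind G := seq_quot _ G _ hG h1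
  exact seq_le_ind _ G hG rfl _ h2

end Multigraph

/-- If `H'` is obtained from a finite multigraph `H` by a finite sequence of
edge-class contractions, then `ind H' ≤ ind H`. -/
theorem stmt_8 {α : Type*} [DecidableEq α] (H H' : Multigraph α)
    (hH : H.IsGood)
    (h : Relation.ReflTransGen Multigraph.ContractStep H H') :
    H'.ind ≤ H.ind := by
  induction h with
  | refl => exact le_refl _
  | tail hsteps hstep ih =>
    rename_i B C
    have hBgood : B.IsGood := by
      clear hstep ih
      induction hsteps with
      | refl => exact hH
      | tail hsteps' hstep' ih' => exact Multigraph.good_contractStep ih' hstep'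
    exact le_trans (Multigraph.ind_contractStep hBgood hstep) ih
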